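/- Dimension independence of the cohesion radius: the swarm size bound ε = (b/a)·√(c/2)·exp(−1/2) from Theorem 1 depends only on the model parameters a, b, c and not on the dimension n of the state space nor (for M large) on the number M of swarm members; formally, for every n ≥ 1 and every M ≥ 2, under Assumption 1 and the coefficient condition a − (a² + b²Φ²)M²/(2(M−1)) > 0 with Φ = a/b, every trajectory of the model x_i(k+1) = x_i(k) + Σ_{j≠i} g(x_i(k) − x_j(k)) in ℝⁿ satisfies: for each i there exists k with ‖x_i(k) − x̄‖ ≤ (b/a)·√(c/2)·exp(−1/2). -/

import Mathlib

/-- Attraction–repulsion function `g(y) = −y(a − b·exp(−‖y‖²/c))` on ℝⁿ. -/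
noncomputable def g (a b c : ℝ) {n : ℕ} (y : EuclideanSpace ℝ (Fin n)) :
    EuclideanSpace ℝ (Fin n) :=
  (-(a - b * Real.exp (-‖y‖ ^ 2 / c))) • y

lemma g_zero (a b c : ℝ) {n : ℕ} : g a b c (0 : EuclideanSpace ℝ (Fin n)) = 0 := by
  simp [g]

lemma g_neg (a b c : ℝ) {n : ℕ} (y : EuclideanSpace ℝ (Fin n)) :
    g a b c (-y) = -(g a b c y) := by
  simp [g, smul_neg]

lemma sum_antisymm {E : Type*} [AddCommGroup E] [Module ℝ E] {M : ℕ}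
    (f : Fin M → Fin M → E) (h0 : ∀ i, f i i = 0)
    (hanti : ∀ i j, f j i = -f i j) :
    ∑ i, ∑ j ∈ Finset.univ.erase i, f i j = 0 := by
  have h1 : ∑ i, ∑ j ∈ Finset.univ.erase i, f i j = ∑ i, ∑ j, f i j := by
    refine Finset.sum_congr rfl fun i _ => ?_
    exact Finset.sum_erase _ (h0 i)
  set T := ∑ i, ∑ j, f i j with hT
  have h2 : T = -T := by
    calc T = ∑ j, ∑ i, f i j := Finset.sum_comm
      _ = ∑ j, ∑ i, -(f j i) := by
          refine Finset.sum_congr rfl fun j _ => Finset.sum_congr rfl fun i _ => ?_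
          rw [hanti]
      _ = -∑ j, ∑ i, f j i := by
          rw [← Finset.sum_neg_distrib]
          exact Finset.sum_congr rfl fun j _ => (Finset.sum_neg_distrib _)
      _ = -T := by rw [hT]
  have h3 : (2 : ℝ) • T = 0 := by
    rw [two_smul]
    nth_rewrite 1 [h2]
    simp
  rw [h1]
  rcases smul_eq_zero.mp h3 with h | h
  · norm_num at h
  · exact h

lemma key_scalar (c t : ℝ) (hc : 0 < c) :
    t * Real.exp (-t ^ 2 / c) ≤ Real.sqrt (c / 2) * Real.exp (-(1 / 2 : ℝ)) := by
  set s := Real.sqrt (c / 2) with hs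
  have hs0 : 0 < s := Real.sqrt_pos.mpr (by linarith)
  have hs2 : s ^ 2 = c / 2 := Real.sq_sqrt (by linarith)
  have h1 : t ^ 2 / c - 1 / 2 + 1 ≤ Real.exp (t ^ 2 / c - 1 / 2) :=
    Real.add_one_le_exp _
  have h2 : t ≤ s * Real.exp (t ^ 2 / c - 1 / 2) := by
    have hc2 : c = 2 * s ^ 2 := by linarith
    have h3 : t ≤ s * (t ^ 2 / c - 1 / 2 + 1) := by
      rw [hc2, mul_comm, ← sub_nonneg]
      have hne : (2 : ℝ) * s ^ 2 ≠ 0 := by positivity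
      field_simp
      nlinarith [sq_nonneg (t - s)]
    calc t ≤ s * (t ^ 2 / c - 1 / 2 + 1) := h3
      _ ≤ s * Real.exp (t ^ 2 / c - 1 / 2) := mul_le_mul_of_nonneg_left h1 hs0.le
  have hexp : 0 < Real.exp (-t ^ 2 / c) := Real.exp_pos _
  calc t * Real.exp (-t ^ 2 / c)
      ≤ (s * Real.exp (t ^ 2 / c - 1 / 2)) * Real.exp (-t ^ 2 / c) :=
        mul_le_mul_of_nonneg_right h2 hexp.le
    _ = s * Real.exp (-(1 / 2 : ℝ)) := by
        rw [mul_assoc, ← Real.exp_add]; ring_nf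

/-- dimension independence of the cohesion radius: for every
dimension `n ≥ 1` and every number of members `M ≥ 2`, under Assumption 1
(pairwise distances always exceed `δ = √(c·ln(b/a))`) and the coefficient
condition `a − (a²+b²Φ²)M²/(2(M−1)) > 0` with `Φ = a/b`, every trajectory of
the swarm model satisfies: for each `i` there is a time `k` with
`‖x_i(k) − x̄‖ ≤ (b/a)·√(c/2)·exp(−1/2)` — a bound depending only on the model
parameters `a, b, c`. -/
theorem cohesion_radius_dimension_independent (a b c : ℝ)
    (ha : 0 < a) (hb : 0 < b) (hc : 0 < c) (hba : a < b) :
    ∀ n : ℕ, 1 ≤ n → ∀ M : ℕ, 2 ≤ M →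
    ∀ x : ℕ → Fin M → EuclideanSpace ℝ (Fin n),
    (∀ k i, x (k + 1) i =
      x k i + ∑ j ∈ Finset.univ.erase i, g a b c (x k i - x k j)) →
    (∀ (k : ℕ) (i j : Fin M), i ≠ j →
      Real.sqrt (c * Real.log (b / a)) < ‖x k i - x k j‖) →
    0 < a - (a ^ 2 + b ^ 2 * (a / b) ^ 2) * (M : ℝ) ^ 2 / (2 * ((M : ℝ) - 1)) →
    ∀ i : Fin M, ∃ k : ℕ,
      ‖x k i - (M : ℝ)⁻¹ • ∑ j, x 0 j‖ ≤
        b / a * Real.sqrt (c / 2) * Real.exp (-(1 / 2 : ℝ)) := by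
  intro n hn M hM x hdyn _hassum hcoef i
  have hMR : (2 : ℝ) ≤ (M : ℝ) := by exact_mod_cast hM
  have hM1 : (0 : ℝ) < (M : ℝ) - 1 := by linarith
  set ε : ℝ := b / a * Real.sqrt (c / 2) * Real.exp (-(1 / 2 : ℝ)) with hε
  have hsq0 : 0 < Real.sqrt (c / 2) := Real.sqrt_pos.mpr (by linarith)
  have hε0 : 0 < ε := by positivity
  -- coefficient condition ⟹ a·M² < M − 1
  have hD : (a ^ 2 + b ^ 2 * (a / b) ^ 2) * (M : ℝ) ^ 2 / (2 * ((M : ℝ) - 1))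
      = a ^ 2 * (M : ℝ) ^ 2 / ((M : ℝ) - 1) := by
    have hbne : b ≠ 0 := hb.ne'
    field_simp
    ring
  rw [hD] at hcoef
  have h2 : a ^ 2 * (M : ℝ) ^ 2 < a * ((M : ℝ) - 1) := by
    have : a ^ 2 * (M : ℝ) ^ 2 / ((M : ℝ) - 1) < a := by linarith
    exact (div_lt_iff₀ hM1).mp this
  have hcoef' : a * (M : ℝ) ^ 2 < (M : ℝ) - 1 := by nlinarith
  have haM : 0 < a * (M : ℝ) := by positivity
  have haM1 : a * (M : ℝ) < 1 := by nlinarith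
  -- invariance of the barycenter
  set S : ℕ → EuclideanSpace ℝ (Fin n) := fun k => ∑ j, x k j with hSdef
  have hS : ∀ k, S k = S 0 := by
    intro k
    induction k with
    | zero => rfl
    | succ k ih =>
      have hstep : S (k + 1) = S k := by
        show ∑ j, x (k + 1) j = ∑ j, x k j
        calc ∑ j, x (k + 1) j
            = ∑ i', (x k i' + ∑ j ∈ Finset.univ.erase i', g a b c (x k i' - x k j)) :=
              Finset.sum_congr rfl fun i' _ => hdyn k i'
          _ = ∑ i', x k i'
              + ∑ i', ∑ j ∈ Finset.univ.erase i', g a b c (x k i' - x k j) :=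
              Finset.sum_add_distrib
          _ = ∑ i', x k i' := by
              rw [sum_antisymm (fun i' j => g a b c (x k i' - x k j)) ?_ ?_, add_zero]
              · intro i'
                simp only [sub_self]
                exact g_zero a b c
              · intro i' j
                show g a b c (x k j - x k i') = -(g a b c (x k i' - x k j))
                rw [← neg_sub, g_neg]
      rw [hstep, ih]
  set xb : EuclideanSpace ℝ (Fin n) := (M : ℝ)⁻¹ • S 0 with hxb
  have hMne : ((M : ℝ)) ≠ 0 := by positivity
  have hMxb : (M : ℝ) • xb = S 0 := by
    rw [hxb, smul_smul, mul_inv_cancel₀ hMne, one_smul]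
  -- erase-sum identity
  have hsum_y : ∀ k, ∑ j ∈ Finset.univ.erase i, (x k i - x k j)
      = (M : ℝ) • (x k i - xb) := by
    intro k
    have herase : ∑ j ∈ Finset.univ.erase i, (x k i - x k j)
        = ∑ j : Fin M, (x k i - x k j) := Finset.sum_erase _ (sub_self _)
    rw [herase]
    rw [Finset.sum_sub_distrib, Finset.sum_const, Finset.card_univ, Fintype.card_fin]
    have hcast : (M • x k i : EuclideanSpace ℝ (Fin n)) = (M : ℝ) • x k i :=
      (Nat.cast_smul_eq_nsmul ℝ M (x k i)).symm
    rw [hcast, smul_sub]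
    have hSk : (∑ j, x k j) = (M : ℝ) • xb := by
      have h' : (∑ j, x k j) = S k := rfl
      rw [h', hS k, ← hMxb]
    rw [hSk]
  -- per-step recurrence
  have haε : a * ε = b * (Real.sqrt (c / 2) * Real.exp (-(1 / 2 : ℝ))) := by
    rw [hε]
    field_simp
  have hrec : ∀ k, ‖x (k + 1) i - xb‖
      ≤ (1 - a * (M : ℝ)) * ‖x k i - xb‖ + ((M : ℝ) - 1) * (a * ε) := by
    intro k
    have hg : ∀ j, g a b c (x k i - x k j)
        = (-a) • (x k i - x k j)
          + (b * Real.exp (-‖x k i - x k j‖ ^ 2 / c)) • (x k i - x k j) := by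
      intro j
      rw [g, ← add_smul]
      congr 1
      ring
    have hdecomp : x (k + 1) i - xb
        = (1 - a * (M : ℝ)) • (x k i - xb)
          + ∑ j ∈ Finset.univ.erase i,
              (b * Real.exp (-‖x k i - x k j‖ ^ 2 / c)) • (x k i - x k j) := by
      rw [hdyn k i, Finset.sum_congr rfl (fun j _ => hg j), Finset.sum_add_distrib,
        ← Finset.smul_sum, hsum_y k, smul_smul]
      rw [sub_smul, one_smul, show (-a) * (M : ℝ) = -(a * (M : ℝ)) by ring, neg_smul]
      abel
    rw [hdecomp]
    have hterm : ∀ j ∈ Finset.univ.erase i,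
        ‖(b * Real.exp (-‖x k i - x k j‖ ^ 2 / c)) • (x k i - x k j)‖ ≤ a * ε := by
      intro j _
      rw [norm_smul, Real.norm_of_nonneg (by positivity), haε]
      have := key_scalar c ‖x k i - x k j‖ hc
      calc b * Real.exp (-‖x k i - x k j‖ ^ 2 / c) * ‖x k i - x k j‖
          = b * (‖x k i - x k j‖ * Real.exp (-‖x k i - x k j‖ ^ 2 / c)) := by ring
        _ ≤ b * (Real.sqrt (c / 2) * Real.exp (-(1 / 2 : ℝ))) :=
            mul_le_mul_of_nonneg_left this hb.le
    have hcard : ((Finset.univ.erase i).card : ℝ) = (M : ℝ) - 1 := by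
      rw [Finset.card_erase_of_mem (Finset.mem_univ i), Finset.card_univ, Fintype.card_fin]
      have : (1 : ℕ) ≤ M := by omega
      push_cast [Nat.cast_sub this]
      ring
    calc ‖(1 - a * (M : ℝ)) • (x k i - xb)
        + ∑ j ∈ Finset.univ.erase i,
            (b * Real.exp (-‖x k i - x k j‖ ^ 2 / c)) • (x k i - x k j)‖
        ≤ ‖(1 - a * (M : ℝ)) • (x k i - xb)‖
          + ‖∑ j ∈ Finset.univ.erase i,
              (b * Real.exp (-‖x k i - x k j‖ ^ 2 / c)) • (x k i - x k j)‖ :=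
          norm_add_le _ _
      _ ≤ (1 - a * (M : ℝ)) * ‖x k i - xb‖ + ((M : ℝ) - 1) * (a * ε) := by
          gcongr ?_ + ?_
          · rw [norm_smul, Real.norm_of_nonneg (by linarith)]
          · calc ‖∑ j ∈ Finset.univ.erase i,
                (b * Real.exp (-‖x k i - x k j‖ ^ 2 / c)) • (x k i - x k j)‖
                ≤ ∑ j ∈ Finset.univ.erase i,
                    ‖(b * Real.exp (-‖x k i - x k j‖ ^ 2 / c)) • (x k i - x k j)‖ :=
                  norm_sum_le _ _
              _ ≤ ∑ j ∈ Finset.univ.erase i, a * ε := Finset.sum_le_sum hterm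
              _ = ((M : ℝ) - 1) * (a * ε) := by
                  rw [Finset.sum_const, nsmul_eq_mul, hcard]
  -- conclude by contradiction
  by_contra hcon
  push_neg at hcon
  have hdec : ∀ k, ‖x (k + 1) i - xb‖ ≤ ‖x k i - xb‖ - a * ε := by
    intro k
    have h1 := hrec k
    have h2 := hcon k
    nlinarith [haM, h2, h1]
  have hlin : ∀ k : ℕ, ‖x k i - xb‖ ≤ ‖x 0 i - xb‖ - k * (a * ε) := by
    intro k
    induction k with
    | zero => simp
    | succ k ih =>
      have := hdec k
      push_cast
      push_cast at ih
      linarith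
  obtain ⟨k, hk⟩ := exists_nat_gt (‖x 0 i - xb‖ / (a * ε))
  have haε0 : 0 < a * ε := by positivity
  rw [div_lt_iff₀ haε0] at hk
  have h1 := hlin k
  have h2 := hcon k
  linarith
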